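/- (Theorem 1, point 2: the identified pair is an extreme point of the lag-one autocorrelation function.) Fix an index i and suppose Σ₁ is symmetric (the cross-uncorrelated-errors case). Suppose (λ₀ᵢ*, λ₁ᵢ*) ∈ ℝ² satisfies the Yule–Walker identification system at location i and that h(λ₀ᵢ*) ≠ 0. Then the function φ(c) := g(c)/h(c) satisfies φ(λ₀ᵢ*) = λ₁ᵢ* and φ has derivative 0 at c = λ₀ᵢ*. -/

import Mathlib

open Matrix

/-- Quadratic expansion and derivative of `c ↦ (e - c•w) ⬝ᵥ S *ᵥ (e - c•w)`. -/
lemma quad_hasDerivAt {p : ℕ} (S : Matrix (Fin p) (Fin p) ℝ) (e w : Fin p → ℝ) (c₀ : ℝ) :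
    HasDerivAt (fun c : ℝ => (e - c • w) ⬝ᵥ S *ᵥ (e - c • w))
      (-(w ⬝ᵥ S *ᵥ (e - c₀ • w)) - ((e - c₀ • w) ⬝ᵥ S *ᵥ w)) c₀ := by
  have key : (fun c : ℝ => (e - c • w) ⬝ᵥ S *ᵥ (e - c • w))
      = fun c : ℝ => (e ⬝ᵥ S *ᵥ e) - (w ⬝ᵥ S *ᵥ e + e ⬝ᵥ S *ᵥ w) * c
          + (w ⬝ᵥ S *ᵥ w) * c ^ 2 := by
    funext c
    simp only [Matrix.mulVec_sub, Matrix.mulVec_smul, sub_dotProduct, dotProduct_sub,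
      smul_dotProduct, dotProduct_smul, smul_eq_mul]
    ring
  rw [key]
  have hd : HasDerivAt (fun c : ℝ => (e ⬝ᵥ S *ᵥ e) - (w ⬝ᵥ S *ᵥ e + e ⬝ᵥ S *ᵥ w) * c
      + (w ⬝ᵥ S *ᵥ w) * c ^ 2)
      (0 - (w ⬝ᵥ S *ᵥ e + e ⬝ᵥ S *ᵥ w) * 1 + (w ⬝ᵥ S *ᵥ w) * (2 * c₀ ^ 1)) c₀ := by
    exact ((hasDerivAt_const c₀ _).sub ((hasDerivAt_id c₀).const_mul _)).add
      ((hasDerivAt_pow 2 c₀).const_mul _)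
  convert hd using 1
  simp only [Matrix.mulVec_sub, Matrix.mulVec_smul, sub_dotProduct, dotProduct_sub,
    smul_dotProduct, dotProduct_smul, smul_eq_mul, pow_one]
  ring

theorem stmt_4 (p : ℕ) (hp : 0 < p)
    (W : Matrix (Fin p) (Fin p) ℝ) (hW : ∀ i, W i i = 0)
    (l₀ l₁ : Fin p → ℝ)
    (M : Matrix (Fin p) (Fin p) ℝ) (hM : M = 1 - Matrix.diagonal l₀ * W)
    (hMinv : IsUnit M)
    (A : Matrix (Fin p) (Fin p) ℝ) (hA : A = M⁻¹ * Matrix.diagonal l₁ * M)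
    (Sig0 : Matrix (Fin p) (Fin p) ℝ) (hSig0 : Sig0.PosDef)
    (Sig1 : Matrix (Fin p) (Fin p) ℝ) (hSig1 : Sig1 = A * Sig0)
    (i : Fin p)
    (hsym : Sig1.IsSymm)
    (g h : ℝ → ℝ)
    (hg : ∀ c : ℝ, g c = (Pi.single i 1 - c • W i) ⬝ᵥ
      Sig1.mulVec (Pi.single i 1 - c • W i))
    (hh : ∀ c : ℝ, h c = (Pi.single i 1 - c • W i) ⬝ᵥ
      Sig0.mulVec (Pi.single i 1 - c • W i))
    (lstar0 lstar1 : ℝ)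
    (hsol : Matrix.vecMul (Pi.single i 1 - lstar0 • W i) Sig1
        = lstar1 • Matrix.vecMul (Pi.single i 1 - lstar0 • W i) Sig0)
    (hh0 : h lstar0 ≠ 0) :
    (fun c => g c / h c) lstar0 = lstar1 ∧
      HasDerivAt (fun c => g c / h c) 0 lstar0 := by
  set e : Fin p → ℝ := Pi.single i 1 with he
  set w : Fin p → ℝ := W i with hw
  set v : Fin p → ℝ := e - lstar0 • w with hv
  -- from hsol: v ⬝ᵥ Sig1 *ᵥ u = lstar1 * (v ⬝ᵥ Sig0 *ᵥ u) for all u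
  have key : ∀ u : Fin p → ℝ, v ⬝ᵥ Sig1 *ᵥ u = lstar1 * (v ⬝ᵥ Sig0 *ᵥ u) := by
    intro u
    rw [dotProduct_mulVec, dotProduct_mulVec, hsol, smul_dotProduct, smul_eq_mul]
  -- symmetry swaps
  have swap1 : w ⬝ᵥ Sig1 *ᵥ v = v ⬝ᵥ Sig1 *ᵥ w := by
    rw [dotProduct_mulVec, ← mulVec_transpose, hsym.eq, dotProduct_comm]
  have swap0 : w ⬝ᵥ Sig0 *ᵥ v = v ⬝ᵥ Sig0 *ᵥ w := by
    have hS0T : Sig0ᵀ = Sig0 := hSig0.1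
    rw [dotProduct_mulVec, ← mulVec_transpose, hS0T, dotProduct_comm]
  -- values at lstar0
  have hgv : g lstar0 = lstar1 * h lstar0 := by
    rw [hg, hh, ← hv, key]
  have hφ : g lstar0 / h lstar0 = lstar1 := by
    rw [hgv, mul_div_assoc, div_self hh0, mul_one]
  refine ⟨hφ, ?_⟩
  -- derivatives
  have hgd : HasDerivAt g (-(w ⬝ᵥ Sig1 *ᵥ v) - v ⬝ᵥ Sig1 *ᵥ w) lstar0 := by
    have := quad_hasDerivAt Sig1 e w lstar0
    rw [← hv] at this
    exact (funext hg : g = _) ▸ this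
  have hhd : HasDerivAt h (-(w ⬝ᵥ Sig0 *ᵥ v) - v ⬝ᵥ Sig0 *ᵥ w) lstar0 := by
    have := quad_hasDerivAt Sig0 e w lstar0
    rw [← hv] at this
    exact (funext hh : h = _) ▸ this
  have hgd' : HasDerivAt g (lstar1 * (-(w ⬝ᵥ Sig0 *ᵥ v) - v ⬝ᵥ Sig0 *ᵥ w)) lstar0 := by
    convert hgd using 1
    rw [swap1, swap0, key]
    ring
  have := hgd'.div hhd hh0
  refine this.congr_deriv ?_
  rw [hgv]
  field_simp
  ring
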